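/- The Hausdorff dimension of the space ℝ^r × ℚ_{p₁} × ⋯ × ℚ_{p_k}, equipped with the maximum metric combining the Euclidean absolute values and the normalized p_i-adic absolute values, equals r + k. -/

import Mathlib

open scoped NNReal ENNReal
open MeasureTheory Metric Set Filter Topology

namespace DimHMixed

noncomputable def dig (p : ℕ) (n : ℕ) (a : ℝ) : ℤ := ⌊a * p ^ (n + 1)⌋ - p * ⌊a * p ^ n⌋

lemma dig_nonneg {p : ℕ} (n : ℕ) (a : ℝ) : 0 ≤ dig p n a := by
  have h : (p : ℤ) * ⌊a * p ^ n⌋ ≤ ⌊a * p ^ (n + 1)⌋ := by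
    apply Int.le_floor.2
    push_cast
    calc ((p : ℝ)) * ⌊a * p ^ n⌋ ≤ p * (a * p ^ n) := by
          apply mul_le_mul_of_nonneg_left (Int.floor_le _) (by positivity)
      _ = a * p ^ (n + 1) := by ring
  simpa [dig] using h

lemma dig_lt {p : ℕ} (hp : 0 < p) (n : ℕ) (a : ℝ) : dig p n a < p := by
  have h : ⌊a * p ^ (n + 1)⌋ < p * ⌊a * p ^ n⌋ + p := by
    apply Int.floor_lt.2
    push_cast
    calc a * p ^ (n + 1) = (p : ℝ) * (a * p ^ n) := by ring
      _ < p * (⌊a * p ^ n⌋ + 1) := by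
          apply mul_lt_mul_of_pos_left (Int.lt_floor_add_one _) (by positivity)
      _ = (p : ℝ) * ⌊a * p ^ n⌋ + p := by ring
  simpa [dig] using by linarith

/-- Partial digit sum, with digit `n` given weight `p ^ n`. -/
noncomputable def digS (p : ℕ) (v : ℕ) (a : ℝ) : ℤ :=
  ∑ n ∈ Finset.range v, dig p n a * p ^ n

lemma digS_nonneg {p : ℕ} (v : ℕ) (a : ℝ) : 0 ≤ digS p v a :=
  Finset.sum_nonneg fun n _ => mul_nonneg (dig_nonneg n a) (by positivity)

lemma digS_lt {p : ℕ} (hp : 0 < p) (v : ℕ) (a : ℝ) : digS p v a < (p : ℤ) ^ v := by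
  induction v with
  | zero => simp [digS]
  | succ v ih =>
      rw [digS, Finset.sum_range_succ, ← digS]
      have h1 : dig p v a ≤ (p : ℤ) - 1 := by have := dig_lt hp v a; omega
      have h2 : dig p v a * (p:ℤ) ^ v ≤ ((p:ℤ) - 1) * p ^ v :=
        mul_le_mul_of_nonneg_right h1 (by positivity)
      have h3 : ((p:ℤ) - 1) * p ^ v + p ^ v = p ^ (v + 1) := by ring
      omega

variable {p : ℕ} [hp : Fact p.Prime]

lemma norm_term_le (n : ℕ) (a : ℝ) :
    ‖(dig p n a : ℚ_[p]) * (p : ℚ_[p]) ^ n‖ ≤ ((p : ℝ)⁻¹) ^ n := by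
  rw [norm_mul]
  calc ‖((dig p n a : ℤ) : ℚ_[p])‖ * ‖(p : ℚ_[p]) ^ n‖
      ≤ 1 * ‖(p : ℚ_[p]) ^ n‖ := by
        apply mul_le_mul_of_nonneg_right (Padic.norm_int_le_one _) (norm_nonneg _)
    _ = ((p : ℝ)⁻¹) ^ n := by
        rw [one_mul, Padic.norm_p_pow, zpow_neg, ← zpow_natCast, inv_zpow]

lemma summable_term (a : ℝ) :
    Summable fun n => (dig p n a : ℚ_[p]) * (p : ℚ_[p]) ^ n := by
  apply Summable.of_norm_bounded ?_ (fun n => norm_term_le n a)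
  apply summable_geometric_of_lt_one (by positivity)
  rw [inv_lt_one_iff₀]
  right
  exact_mod_cast hp.out.one_lt

/-- The "digit reversal" map sending `a : ℝ` to the `p`-adic number whose `n`-th digit is
the `n`-th fractional base-`p` digit of `a`. -/
noncomputable def hmap (p : ℕ) [Fact p.Prime] (a : ℝ) : ℚ_[p] :=
  ∑' n, (dig p n a : ℚ_[p]) * (p : ℚ_[p]) ^ n

lemma hmap_sub_digS_norm_le (v : ℕ) (a : ℝ) :
    ‖hmap p a - (digS p v a : ℚ_[p])‖ ≤ ((p : ℝ)⁻¹) ^ v := by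
  have hs := summable_term (p := p) a
  have hsplit := Summable.sum_add_tsum_nat_add (f := fun n => (dig p n a : ℚ_[p]) * (p : ℚ_[p]) ^ n) v hs
  have hcast : ((digS p v a : ℤ) : ℚ_[p]) =
      ∑ n ∈ Finset.range v, (dig p n a : ℚ_[p]) * (p : ℚ_[p]) ^ n := by
    rw [digS]; push_cast; rfl
  have : hmap p a - (digS p v a : ℚ_[p]) =
      ∑' n, (dig p (n + v) a : ℚ_[p]) * (p : ℚ_[p]) ^ (n + v) := by
    rw [hmap, hcast, ← hsplit]; ring
  rw [this]
  apply IsUltrametricDist.norm_tsum_le_of_forall_le_of_nonneg (by positivity)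
  intro n
  calc ‖(dig p (n + v) a : ℚ_[p]) * (p : ℚ_[p]) ^ (n + v)‖ ≤ ((p:ℝ)⁻¹) ^ (n + v) :=
        norm_term_le _ _
    _ ≤ ((p:ℝ)⁻¹) ^ v := by
        apply pow_le_pow_of_le_one (by positivity) ?_ (Nat.le_add_left v n)
        rw [inv_le_one_iff₀]; right; exact_mod_cast hp.out.one_le

lemma hmap_norm_le_one (a : ℝ) : ‖hmap p a‖ ≤ 1 := by
  apply IsUltrametricDist.norm_tsum_le_of_forall_le_of_nonneg zero_le_one
  intro n
  calc ‖(dig p n a : ℚ_[p]) * (p : ℚ_[p]) ^ n‖ ≤ ((p:ℝ)⁻¹) ^ n := norm_term_le _ _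
    _ ≤ 1 ^ n := by
        apply pow_le_pow_left₀ (by positivity)
        rw [inv_le_one_iff₀]; right; exact_mod_cast hp.out.one_le
    _ = 1 := one_pow _

/-- From equality of the (reversed) digit sums we get equality of the floors. -/
lemma floor_eq_of_digS_eq {a b : ℝ} (v : ℕ) (h : digS p v a = digS p v b) :
    ⌊a * p ^ v⌋ - (p:ℤ) ^ v * ⌊a⌋ = ⌊b * p ^ v⌋ - (p:ℤ) ^ v * ⌊b⌋ := by
  induction v with
  | zero => simp
  | succ v ih =>
      have hp0 : 0 < p := hp.out.pos
      rw [show digS p (v+1) a = digS p v a + dig p v a * (p:ℤ) ^ v from Finset.sum_range_succ _ _,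
        show digS p (v+1) b = digS p v b + dig p v b * (p:ℤ) ^ v from Finset.sum_range_succ _ _] at h
      have hdvd : ((p:ℤ)^v) ∣ (digS p v a - digS p v b) :=
        ⟨dig p v b - dig p v a, by linarith [h]⟩
      have habs : |digS p v a - digS p v b| < (p:ℤ)^v := by
        have h1 := digS_nonneg (p := p) v a
        have h2 := digS_nonneg (p := p) v b
        have h3 := digS_lt hp0 v a
        have h4 := digS_lt hp0 v b
        rw [abs_lt]; omega
      have hS : digS p v a = digS p v b := by
        have := Int.eq_zero_of_abs_lt_dvd hdvd habs
        omega
      have hdig : dig p v a = dig p v b := by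
        have hpv : (0:ℤ) < (p:ℤ)^v := by positivity
        have : (dig p v a - dig p v b) * (p:ℤ)^v = 0 := by linarith [h, hS]
        have := mul_eq_zero.1 this
        rcases this with h' | h'
        · omega
        · omega
      -- now use the recurrence for the floors
      have hqa : ⌊a * p ^ (v+1)⌋ = dig p v a + p * ⌊a * p ^ v⌋ := by
        rw [dig]; ring
      have hqb : ⌊b * p ^ (v+1)⌋ = dig p v b + p * ⌊b * p ^ v⌋ := by
        rw [dig]; ring
      have ihv := ih hS
      rw [hqa, hqb, hdig]
      have : (p:ℤ)^(v+1) = p * (p:ℤ)^v := by ring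
      rw [this]
      linear_combination (p:ℤ) * ihv

/-- Key anti-Lipschitz property of `hmap` on `[0,1)`. -/
lemma abs_sub_lt_of_norm_le {a b : ℝ} (ha : a ∈ Ico (0:ℝ) 1) (hb : b ∈ Ico (0:ℝ) 1)
    (v : ℕ) (h : ‖hmap p a - hmap p b‖ ≤ ((p:ℝ)⁻¹) ^ v) :
    |a - b| < ((p:ℝ)⁻¹) ^ v := by
  have hp0 : 0 < p := hp.out.pos
  -- the integer digit sums are congruent mod p^v
  have h1 : ‖((digS p v a - digS p v b : ℤ) : ℚ_[p])‖ ≤ ((p:ℝ)⁻¹) ^ v := by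
    have e : ((digS p v a - digS p v b : ℤ) : ℚ_[p]) =
        ((digS p v a : ℚ_[p]) - hmap p a) + (hmap p a - hmap p b)
          + (hmap p b - (digS p v b : ℚ_[p])) := by push_cast; ring
    rw [e]
    refine (IsUltrametricDist.norm_add_le_max _ _).trans (max_le
      ((IsUltrametricDist.norm_add_le_max _ _).trans (max_le ?_ h)) ?_)
    · rw [norm_sub_rev]; exact hmap_sub_digS_norm_le v a
    · exact hmap_sub_digS_norm_le v b
  have h2 : ((p:ℤ) ^ v) ∣ (digS p v a - digS p v b) := by
    apply (Padic.norm_int_le_pow_iff_dvd (p := p) (digS p v a - digS p v b) v).1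
    have hpow : ((p:ℝ)⁻¹) ^ v = (p:ℝ) ^ (-(v:ℤ)) := by
      rw [zpow_neg, ← zpow_natCast, inv_zpow]
    rw [← hpow]
    exact h1
  have h3 : digS p v a = digS p v b := by
    have habs : |digS p v a - digS p v b| < (p:ℤ)^v := by
      have g1 := digS_nonneg (p := p) v a
      have g2 := digS_nonneg (p := p) v b
      have g3 := digS_lt hp0 v a
      have g4 := digS_lt hp0 v b
      rw [abs_lt]; omega
    have := Int.eq_zero_of_abs_lt_dvd h2 habs
    omega
  have h4 := floor_eq_of_digS_eq (p := p) v h3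
  have hfa : ⌊a⌋ = 0 := Int.floor_eq_zero_iff.2 (by exact ⟨ha.1, ha.2⟩)
  have hfb : ⌊b⌋ = 0 := Int.floor_eq_zero_iff.2 (by exact ⟨hb.1, hb.2⟩)
  rw [hfa, hfb] at h4
  simp only [mul_zero, sub_zero] at h4
  -- now |a*p^v - b*p^v| < 1
  have hfr : a * p^v - b * p^v = Int.fract (a * p^v) - Int.fract (b * p^v) := by
    rw [Int.fract, Int.fract, h4]; ring
  have hlt : |a * p^v - b * p^v| < 1 := by
    rw [hfr, abs_lt]
    constructor <;>
      nlinarith [Int.fract_nonneg (a * p^v), Int.fract_lt_one (a * p^v),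
        Int.fract_nonneg (b * p^v), Int.fract_lt_one (b * p^v)]
  have hpv : (0:ℝ) < (p:ℝ)^v := by positivity
  rw [abs_sub_comm] at hlt
  have : |a - b| * (p:ℝ)^v < 1 := by
    calc |a - b| * (p:ℝ)^v = |(a - b) * (p:ℝ)^v| := by
          rw [abs_mul, abs_of_pos hpv]
      _ < 1 := by rw [sub_mul] at *; rw [abs_sub_comm]; exact hlt
  calc |a - b| = |a - b| * (p:ℝ)^v * ((p:ℝ)⁻¹)^v := by
        rw [mul_assoc, ← mul_pow]; field_simp; simp
    _ < 1 * ((p:ℝ)⁻¹)^v := by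
        apply mul_lt_mul_of_pos_right this (by positivity)
    _ = ((p:ℝ)⁻¹)^v := one_mul _

/-- `hmap` is expanding on `[0,1)`. -/
lemma dist_le_dist_hmap {a b : ℝ} (ha : a ∈ Ico (0:ℝ) 1) (hb : b ∈ Ico (0:ℝ) 1) :
    dist a b ≤ dist (hmap p a) (hmap p b) := by
  have hp1 : (1:ℝ) < p := by exact_mod_cast hp.out.one_lt
  by_contra hcon
  push_neg at hcon
  rw [Real.dist_eq, dist_eq_norm] at hcon
  set q := hmap p a - hmap p b with hq
  have hob : |a - b| ≤ 1 := by
    rw [abs_le]; constructor <;> [linarith [ha.1, hb.2]; linarith [ha.2, hb.1]]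
  rcases eq_or_ne q 0 with h0 | h0
  · rw [h0, norm_zero] at hcon
    have hinv : (p:ℝ)⁻¹ < 1 := by
      rw [inv_lt_one_iff₀]; right; exact hp1
    obtain ⟨v, hv⟩ := exists_pow_lt_of_lt_one (y := (p:ℝ)⁻¹) hcon hinv
    have := abs_sub_lt_of_norm_le (p := p) ha hb v (by rw [← hq, h0, norm_zero]; positivity)
    linarith
  · have hval : ‖q‖ = (p:ℝ) ^ (-q.valuation) := Padic.norm_eq_zpow_neg_valuation h0
    have hle1 : ‖q‖ ≤ 1 := by
      rw [hq]
      rw [sub_eq_add_neg]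
      exact (IsUltrametricDist.norm_add_le_max _ _).trans
        (max_le (hmap_norm_le_one a) (by rw [norm_neg]; exact hmap_norm_le_one b))
    have hvpos : 0 ≤ q.valuation := by
      by_contra hneg
      push_neg at hneg
      have : (1:ℝ) < (p:ℝ) ^ (-q.valuation) := by
        apply one_lt_zpow₀ hp1
        omega
      rw [← hval] at this
      linarith
    set v : ℕ := q.valuation.toNat with hv
    have hnorm : ‖q‖ = ((p:ℝ)⁻¹) ^ v := by
      rw [hval, ← zpow_natCast, inv_zpow, ← zpow_neg]
      congr 1
      omega
    have := abs_sub_lt_of_norm_le (p := p) ha hb v (le_of_eq hnorm)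
    rw [hnorm] at hcon
    linarith


lemma dimH_le_dimH_image_of_expand {Y Z : Type*} [EMetricSpace Y] [EMetricSpace Z]
    {f : Y → Z} {s : Set Y} (hf : ∀ x ∈ s, ∀ y ∈ s, edist x y ≤ edist (f x) (f y)) :
    dimH s ≤ dimH (f '' s) := by
  have hg : AntilipschitzWith 1 (fun x : s => f x) := by
    intro x y
    rw [ENNReal.coe_one, one_mul, Subtype.edist_eq]
    exact hf x x.2 y y.2
  calc dimH s = dimH (Subtype.val '' (univ : Set s)) := by rw [Subtype.coe_image_univ]
    _ = dimH (univ : Set s) := isometry_subtype_coe.dimH_image _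
    _ ≤ dimH ((fun x : s => f x) '' univ) := hg.le_dimH_image _
    _ = dimH (f '' s) := by
        rw [image_univ]
        congr 1
        ext z
        simp [Set.range, Subtype.exists]

theorem lower_bound (r k : ℕ) (p : Fin k → ℕ) [∀ i, Fact (p i).Prime] :
    ((r + k : ℕ) : ℝ≥0∞) ≤
      dimH (Set.univ : Set ((Fin r → ℝ) × ((i : Fin k) → ℚ_[p i]))) := by
  set B : Set (Fin (r + k) → ℝ) := univ.pi fun _ => Ico (0:ℝ) 1 with hB
  set F : (Fin (r + k) → ℝ) → ((Fin r → ℝ) × ((i : Fin k) → ℚ_[p i])) := fun u =>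
    (fun i => u (Fin.castAdd k i), fun j => hmap (p j) (u (Fin.natAdd r j))) with hF
  have hexp : ∀ u ∈ B, ∀ w ∈ B, edist u w ≤ edist (F u) (F w) := by
    intro u hu w hw
    rw [edist_pi_def]
    apply Finset.sup_le
    intro i _
    induction i using Fin.addCases with
    | left i =>
        calc edist (u (Fin.castAdd k i)) (w (Fin.castAdd k i))
            = edist ((F u).1 i) ((F w).1 i) := rfl
          _ ≤ edist (F u).1 (F w).1 := edist_le_pi_edist _ _ _
          _ ≤ edist (F u) (F w) := by rw [Prod.edist_eq]; exact le_max_left _ _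
    | right j =>
        have h1 : edist (u (Fin.natAdd r j)) (w (Fin.natAdd r j)) ≤
            edist ((F u).2 j) ((F w).2 j) := by
          rw [edist_dist, edist_dist]
          apply ENNReal.ofReal_le_ofReal
          exact dist_le_dist_hmap (hu _ (mem_univ _)) (hw _ (mem_univ _))
        calc edist (u (Fin.natAdd r j)) (w (Fin.natAdd r j))
            ≤ edist ((F u).2 j) ((F w).2 j) := h1
          _ ≤ edist (F u).2 (F w).2 := edist_le_pi_edist _ _ _
          _ ≤ edist (F u) (F w) := by rw [Prod.edist_eq]; exact le_max_right _ _
  have h1 : dimH B ≤ dimH (F '' B) := dimH_le_dimH_image_of_expand hexp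
  have h2 : dimH B = ((r + k : ℕ) : ℝ≥0∞) := by
    rw [Real.dimH_of_nonempty_interior (E := Fin (r+k) → ℝ) ?_, Module.finrank_fin_fun]
    refine ⟨fun _ => (1:ℝ)/2, ?_⟩
    rw [hB, interior_pi_set finite_univ]
    intro i _
    show (1:ℝ)/2 ∈ interior (Ico (0:ℝ) 1)
    rw [interior_Ico]
    constructor <;> norm_num
  calc ((r + k : ℕ) : ℝ≥0∞) = dimH B := h2.symm
    _ ≤ dimH (F '' B) := h1
    _ ≤ dimH (Set.univ : Set ((Fin r → ℝ) × ((i : Fin k) → ℚ_[p i]))) :=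
        dimH_mono (subset_univ _)


lemma ediam_prod_le {Y Z : Type*} [PseudoEMetricSpace Y] [PseudoEMetricSpace Z]
    {A : Set Y} {B : Set Z} {C : ℝ≥0∞} (hA : EMetric.diam A ≤ C) (hB : EMetric.diam B ≤ C) :
    EMetric.diam (A ×ˢ B) ≤ C := by
  apply EMetric.diam_le
  rintro ⟨x1, x2⟩ ⟨hx1, hx2⟩ ⟨y1, y2⟩ ⟨hy1, hy2⟩
  rw [Prod.edist_eq]
  exact max_le ((EMetric.edist_le_diam_of_mem hx1 hy1).trans hA)
    ((EMetric.edist_le_diam_of_mem hx2 hy2).trans hB)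

lemma ediam_pi_le {ι : Type*} [Fintype ι] {Y : ι → Type*} [∀ i, PseudoEMetricSpace (Y i)]
    {A : ∀ i, Set (Y i)} {C : ℝ≥0∞} (h : ∀ i, EMetric.diam (A i) ≤ C) :
    EMetric.diam (univ.pi A) ≤ C := by
  apply EMetric.diam_le
  intro x hx y hy
  rw [edist_pi_def]
  apply Finset.sup_le
  intro i _
  exact (EMetric.edist_le_diam_of_mem (hx i (mem_univ i)) (hy i (mem_univ i))).trans (h i)

lemma ofReal_inv_two_pow (m : ℕ) : ENNReal.ofReal (((2:ℝ)^m)⁻¹) = 2⁻¹ ^ m := by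
  rw [← inv_pow, ENNReal.ofReal_pow (by norm_num)]
  congr 1
  rw [ENNReal.ofReal_inv_of_pos (by norm_num)]
  norm_num

theorem upper_piece (r k : ℕ) (p : Fin k → ℕ) [hpf : ∀ i, Fact (p i).Prime] (n : ℕ) :
    dimH ((closedBall (0 : Fin r → ℝ) n) ×ˢ
        (univ.pi fun i => closedBall (0 : ℚ_[p i]) ((p i : ℝ)^n)) :
      Set ((Fin r → ℝ) × ((i : Fin k) → ℚ_[p i]))) ≤ ((r + k : ℕ) : ℝ≥0∞) := by
  have hp2 : ∀ i, 2 ≤ p i := fun i => (hpf i).out.two_le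
  borelize ((Fin r → ℝ) × ((i : Fin k) → ℚ_[p i]))
  set T : Set ((Fin r → ℝ) × ((i : Fin k) → ℚ_[p i])) :=
    (closedBall (0 : Fin r → ℝ) n) ×ˢ
      (univ.pi fun i => closedBall (0 : ℚ_[p i]) ((p i : ℝ)^n)) with hT
  have : dimH T ≤ ((r + k : ℕ) : ℝ≥0)  := by
    apply dimH_le_of_hausdorffMeasure_ne_top
    -- set up the coverings
    set c : Fin k → ℕ → ℕ := fun i m => Nat.clog (p i) (2 ^ m) with hc
    set N : ℕ → ℕ := fun m => 2 * n * 2 ^ m + 1 with hN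
    set t : ∀ m : ℕ, ((Fin r → Fin (N m)) × ((i : Fin k) → Fin ((p i) ^ (n + c i m)))) →
        Set ((Fin r → ℝ) × ((i : Fin k) → ℚ_[p i])) := fun m z =>
      (univ.pi fun i : Fin r =>
          Icc (-(n:ℝ) + (z.1 i : ℕ) * ((2:ℝ)^m)⁻¹) (-(n:ℝ) + ((z.1 i : ℕ) + 1) * ((2:ℝ)^m)⁻¹)) ×ˢ
      (univ.pi fun i : Fin k =>
          closedBall (((z.2 i : ℕ) : ℚ_[p i]) * ((p i : ℚ_[p i]) ^ (n:ℤ))⁻¹)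
            ((p i : ℝ) ^ (-(c i m : ℤ)))) with ht
    set rr : ℕ → ℝ≥0∞ := fun m => 2 * 2⁻¹ ^ m with hrr
    have hrr0 : Tendsto rr atTop (𝓝 0) := by
      have h1 : Tendsto (fun m : ℕ => (2⁻¹ : ℝ≥0∞) ^ m) atTop (𝓝 0) :=
        ENNReal.tendsto_pow_atTop_nhds_zero_of_lt_one (by norm_num)
      have := ENNReal.Tendsto.const_mul h1 (Or.inr (by norm_num : (2:ℝ≥0∞) ≠ ⊤))
      simpa using this
    -- diameter bounds
    have hdiam : ∀ m z, EMetric.diam (t m z) ≤ rr m := by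
      intro m z
      apply ediam_prod_le
      · apply ediam_pi_le
        intro i
        rw [EMetric.diam, Real.ediam_Icc]
        have : (-(n:ℝ) + ((z.1 i : ℕ) + 1) * ((2:ℝ)^m)⁻¹) -
            (-(n:ℝ) + (z.1 i : ℕ) * ((2:ℝ)^m)⁻¹) = ((2:ℝ)^m)⁻¹ := by ring
        rw [this, ofReal_inv_two_pow]
        exact le_mul_of_one_le_left zero_le one_le_two
      · apply ediam_pi_le
        intro i
        have hρ : (0:ℝ) ≤ (p i : ℝ) ^ (-(c i m : ℤ)) := by positivity
        rw [← Metric.emetric_closedBall hρ]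
        refine (EMetric.diam_closedBall).trans ?_
        apply mul_le_mul_right
        have h1 : ((p i : ℝ) ^ (-(c i m : ℤ))) ≤ ((2:ℝ)^m)⁻¹ := by
          rw [zpow_neg, zpow_natCast]
          apply inv_anti₀ (by positivity)
          exact_mod_cast Nat.le_pow_clog (hpf i).out.one_lt _
        calc ENNReal.ofReal ((p i : ℝ) ^ (-(c i m : ℤ)))
            ≤ ENNReal.ofReal (((2:ℝ)^m)⁻¹) := ENNReal.ofReal_le_ofReal h1
          _ = 2⁻¹ ^ m := ofReal_inv_two_pow m
    -- covering
    have hcover : ∀ m, T ⊆ ⋃ z, t m z := by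
      intro m
      rintro ⟨x, y⟩ ⟨hx, hy⟩
      have h2m : (0:ℝ) < 2 ^ m := by positivity
      have hxc : ∀ i, |x i| ≤ (n:ℝ) := by
        intro i
        have := (dist_pi_le_iff (by positivity : (0:ℝ) ≤ (n:ℝ))).1 (mem_closedBall.1 hx) i
        simpa [Real.dist_eq] using this
      -- real indices
      have hjlt : ∀ i : Fin r, (⌊(x i + n) * 2 ^ m⌋).toNat < N m := by
        intro i
        have h1 : (x i + n) * 2 ^ m ≤ ((2 * n * 2 ^ m : ℕ) : ℝ) := by
          push_cast
          have := (abs_le.1 (hxc i)).2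
          nlinarith
        have h2 : ⌊(x i + n) * 2 ^ m⌋ ≤ ((2 * n * 2 ^ m : ℕ) : ℤ) := by
          have := Int.floor_le_floor h1
          rwa [Int.floor_natCast] at this
        have h3 : (⌊(x i + n) * 2 ^ m⌋).toNat ≤ 2 * n * 2 ^ m := Int.toNat_le.2 h2
        simp only [hN]
        exact Nat.lt_succ_of_le h3
      -- p-adic indices
      have hynorm : ∀ i, ‖y i * (p i : ℚ_[p i]) ^ (n:ℤ)‖ ≤ 1 := by
        intro i
        have hyi : ‖y i‖ ≤ (p i : ℝ) ^ n := by
          have := hy i (mem_univ i)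
          simpa [Real.dist_eq, dist_eq_norm] using this
        rw [norm_mul, Padic.norm_p_zpow]
        calc ‖y i‖ * (p i:ℝ) ^ (-(n:ℤ)) ≤ (p i:ℝ) ^ n * (p i:ℝ) ^ (-(n:ℤ)) := by
              apply mul_le_mul_of_nonneg_right hyi (by positivity)
          _ = 1 := by
              rw [← zpow_natCast, ← zpow_add₀ (by exact_mod_cast (hpf i).out.ne_zero)]
              simp
      set zi : ∀ i : Fin k, ℤ_[p i] := fun i => ⟨y i * (p i : ℚ_[p i]) ^ (n:ℤ), hynorm i⟩ with hzi
      refine mem_iUnion.2 ⟨⟨fun i => ⟨(⌊(x i + n) * 2 ^ m⌋).toNat, hjlt i⟩,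
        fun i => ⟨(zi i).appr (n + c i m), PadicInt.appr_lt _ _⟩⟩, ?_⟩
      constructor
      · -- real part
        intro i _
        have hfl0 : 0 ≤ ⌊(x i + n) * 2 ^ m⌋ := by
          apply Int.floor_nonneg.2
          have := (abs_le.1 (hxc i)).1
          nlinarith
        have hcast : ((⌊(x i + n) * 2 ^ m⌋).toNat : ℝ) = ⌊(x i + n) * 2 ^ m⌋ := by
          exact_mod_cast Int.toNat_of_nonneg hfl0
        have hfl1 : (⌊(x i + n) * 2 ^ m⌋ : ℝ) ≤ (x i + n) * 2 ^ m := Int.floor_le _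
        have hfl2 : (x i + n) * 2 ^ m < ⌊(x i + n) * 2 ^ m⌋ + 1 := Int.lt_floor_add_one _
        have e1 : (⌊(x i + n) * 2 ^ m⌋ : ℝ) * ((2:ℝ)^m)⁻¹ ≤ x i + n := by
          rw [← div_eq_mul_inv, div_le_iff₀ h2m]
          linarith
        have e2 : x i + n ≤ ((⌊(x i + n) * 2 ^ m⌋ : ℝ) + 1) * ((2:ℝ)^m)⁻¹ := by
          rw [← div_eq_mul_inv, le_div_iff₀ h2m]
          linarith
        constructor
        · show -(n:ℝ) + _ * ((2:ℝ)^m)⁻¹ ≤ x i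
          rw [hcast]
          linarith
        · show x i ≤ -(n:ℝ) + (_ + 1) * ((2:ℝ)^m)⁻¹
          rw [hcast]
          linarith
      · -- p-adic part
        intro i _
        show y i ∈ closedBall _ _
        rw [mem_closedBall, dist_eq_norm]
        have hpne : ((p i : ℚ_[p i]) ^ (n:ℤ)) ≠ 0 := by
          apply zpow_ne_zero
          exact_mod_cast (hpf i).out.ne_zero
        have hyi : y i = (zi i : ℚ_[p i]) * ((p i : ℚ_[p i]) ^ (n:ℤ))⁻¹ := by
          rw [hzi]
          field_simp
        have happr : ‖(zi i : ℚ_[p i]) - ((zi i).appr (n + c i m) : ℚ_[p i])‖ ≤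
            (p i : ℝ) ^ (-(n + c i m : ℕ) : ℤ) := by
          have h1 : (zi i - ((zi i).appr (n + c i m) : ℤ_[p i])) ∈
              Ideal.span {(p i : ℤ_[p i]) ^ (n + c i m)} := PadicInt.appr_spec _ _
          have h2 := (PadicInt.norm_le_pow_iff_mem_span_pow _ _).2 h1
          calc ‖(zi i : ℚ_[p i]) - ((zi i).appr (n + c i m) : ℚ_[p i])‖
              = ‖zi i - ((zi i).appr (n + c i m) : ℤ_[p i])‖ := by
                rw [← PadicInt.padic_norm_e_of_padicInt
                  (zi i - ((zi i).appr (n + c i m) : ℤ_[p i]))]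
                norm_cast
            _ ≤ (p i : ℝ) ^ (-(n + c i m : ℕ) : ℤ) := h2
        calc ‖y i - ((zi i).appr (n + c i m) : ℚ_[p i]) * ((p i : ℚ_[p i]) ^ (n:ℤ))⁻¹‖
            = ‖((zi i : ℚ_[p i]) - ((zi i).appr (n + c i m) : ℚ_[p i])) *
                ((p i : ℚ_[p i]) ^ (n:ℤ))⁻¹‖ := by rw [hyi]; ring_nf
          _ = ‖(zi i : ℚ_[p i]) - ((zi i).appr (n + c i m) : ℚ_[p i])‖ *
                ‖((p i : ℚ_[p i]) ^ (n:ℤ))⁻¹‖ := norm_mul _ _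
          _ ≤ (p i : ℝ) ^ (-(n + c i m : ℕ) : ℤ) * (p i : ℝ) ^ (n:ℤ) := by
              apply mul_le_mul happr ?_ (norm_nonneg _) (by positivity)
              rw [norm_inv, Padic.norm_p_zpow]
              rw [← zpow_neg, neg_neg]
          _ = (p i : ℝ) ^ (-(c i m : ℕ) : ℤ) := by
              rw [← zpow_add₀ (by exact_mod_cast (hpf i).out.ne_zero)]
              congr 1
              push_cast
              ring
    -- the sum bound
    set A : ℕ := (2 * n + 1) ^ r * ∏ i, (p i) ^ (n + 1) with hA
    have hcard : ∀ m, (Fintype.card ((Fin r → Fin (N m)) ×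
        ((i : Fin k) → Fin ((p i) ^ (n + c i m)))) : ℝ≥0∞) ≤
          (A : ℝ≥0∞) * ((2:ℝ≥0∞) ^ m) ^ (r + k) := by
      intro m
      have hcard1 : Fintype.card ((Fin r → Fin (N m)) ×
          ((i : Fin k) → Fin ((p i) ^ (n + c i m)))) =
            (N m) ^ r * ∏ i, (p i) ^ (n + c i m) := by
        rw [Fintype.card_prod, Fintype.card_pi, Fintype.card_pi]
        simp [Finset.prod_const]
      have hNle : N m ≤ (2 * n + 1) * 2 ^ m := by
        have h1 : 1 ≤ 2 ^ m := Nat.one_le_two_pow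
        rw [hN]
        calc 2 * n * 2 ^ m + 1 ≤ 2 * n * 2 ^ m + 2 ^ m := by omega
          _ = (2 * n + 1) * 2 ^ m := by ring
      have hple : ∀ i, (p i) ^ (n + c i m) ≤ (p i) ^ (n + 1) * 2 ^ m := by
        intro i
        rcases Nat.eq_zero_or_pos (c i m) with h0 | h1
        · rw [h0]
          calc (p i) ^ (n + 0) = (p i) ^ n * 1 := by ring
            _ ≤ (p i) ^ (n + 1) * 2 ^ m := by
                apply Nat.mul_le_mul
                · exact Nat.pow_le_pow_right (Nat.le_of_lt (hpf i).out.one_lt) (by omega)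
                · exact Nat.one_le_two_pow
        · have hm1 : 1 < 2 ^ m := by
            rcases Nat.eq_zero_or_pos m with hm0 | hm0
            · exfalso
              rw [hc] at h1
              simp [hm0] at h1
            · exact Nat.one_lt_two_pow_iff.2 (by omega)
          have h2 : (p i) ^ (c i m - 1) < 2 ^ m :=
            Nat.pow_pred_clog_lt_self (hpf i).out.one_lt hm1
          calc (p i) ^ (n + c i m) = (p i) ^ n * (p i) ^ (c i m) := by rw [pow_add]
            _ = (p i) ^ n * ((p i) * (p i) ^ (c i m - 1)) := by
                congr 1
                rw [← pow_succ']
                congr 1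
                omega
            _ ≤ (p i) ^ n * ((p i) * 2 ^ m) := by
                apply Nat.mul_le_mul_left
                apply Nat.mul_le_mul_left
                omega
            _ = (p i) ^ (n + 1) * 2 ^ m := by ring
      have hnat : (N m) ^ r * ∏ i, (p i) ^ (n + c i m) ≤ A * (2 ^ m) ^ (r + k) := by
        calc (N m) ^ r * ∏ i, (p i) ^ (n + c i m)
            ≤ ((2 * n + 1) * 2 ^ m) ^ r * ∏ i, ((p i) ^ (n + 1) * 2 ^ m) := by
              apply Nat.mul_le_mul
              · exact Nat.pow_le_pow_left hNle r
              · exact Finset.prod_le_prod' fun i _ => hple i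
          _ = A * (2 ^ m) ^ (r + k) := by
              rw [hA, Finset.prod_mul_distrib, Finset.prod_const, mul_pow]
              simp [Finset.card_univ, pow_add, mul_pow]
              ring
      rw [hcard1]
      calc ((N m ^ r * ∏ i, p i ^ (n + c i m) : ℕ) : ℝ≥0∞)
          ≤ ((A * (2 ^ m) ^ (r + k) : ℕ) : ℝ≥0∞) := by exact_mod_cast Nat.cast_le.2 hnat
        _ = (A : ℝ≥0∞) * ((2:ℝ≥0∞) ^ m) ^ (r + k) := by push_cast; ring
    -- apply the covering lemma
    have key := Measure.hausdorffMeasure_le_liminf_sum (X := (Fin r → ℝ) × ((i : Fin k) → ℚ_[p i]))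
      (((r + k : ℕ) : ℝ≥0) : ℝ) T rr hrr0 t
      (Eventually.of_forall hdiam) (Eventually.of_forall hcover)
    have hbound : ∀ m, (∑ z, EMetric.diam (t m z) ^ (((r + k : ℕ) : ℝ≥0) : ℝ)) ≤
        (A : ℝ≥0∞) * 2 ^ (r + k) := by
      intro m
      have hd0 : (0:ℝ) ≤ (((r + k : ℕ) : ℝ≥0) : ℝ) := by positivity
      calc ∑ z, EMetric.diam (t m z) ^ (((r + k : ℕ) : ℝ≥0) : ℝ)
          ≤ ∑ _z : ((Fin r → Fin (N m)) × ((i : Fin k) → Fin ((p i) ^ (n + c i m)))),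
            (rr m) ^ (((r + k : ℕ) : ℝ≥0) : ℝ) := by
            apply Finset.sum_le_sum
            intro z _
            exact ENNReal.rpow_le_rpow (hdiam m z) hd0
        _ = (Fintype.card ((Fin r → Fin (N m)) ×
              ((i : Fin k) → Fin ((p i) ^ (n + c i m)))) : ℝ≥0∞) *
            (rr m) ^ (((r + k : ℕ) : ℝ≥0) : ℝ) := by
            rw [Finset.sum_const, Finset.card_univ, nsmul_eq_mul]
        _ ≤ ((A : ℝ≥0∞) * ((2:ℝ≥0∞) ^ m) ^ (r + k)) * (rr m) ^ (((r + k : ℕ) : ℝ≥0) : ℝ) :=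
            mul_le_mul_left (hcard m) _
        _ = (A : ℝ≥0∞) * 2 ^ (r + k) := by
            have hrw : (rr m) ^ (((r + k : ℕ) : ℝ≥0) : ℝ) = (rr m) ^ ((r + k : ℕ)) := by
              rw [show (((r + k : ℕ) : ℝ≥0) : ℝ) = ((r + k : ℕ) : ℝ) by push_cast; rfl]
              exact ENNReal.rpow_natCast _ _
            have hone : (2:ℝ≥0∞) * 2⁻¹ = 1 := ENNReal.mul_inv_cancel (by norm_num) (by norm_num)
            rw [hrw, hrr]
            calc (A : ℝ≥0∞) * ((2:ℝ≥0∞) ^ m) ^ (r + k) * ((2 * 2⁻¹ ^ m) ^ (r + k))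
                = (A : ℝ≥0∞) * 2 ^ (r + k) * ((((2:ℝ≥0∞) * 2⁻¹) ^ m) ^ (r + k)) := by
                  rw [mul_pow 2 ((2:ℝ≥0∞)⁻¹ ^ m), mul_pow (2:ℝ≥0∞) 2⁻¹]
                  ring
              _ = (A : ℝ≥0∞) * 2 ^ (r + k) := by rw [hone]; simp
    have hliminf : liminf
        (fun m => ∑ z, EMetric.diam (t m z) ^ (((r + k : ℕ) : ℝ≥0) : ℝ)) atTop ≤
          (A : ℝ≥0∞) * 2 ^ (r + k) :=
      (liminf_le_liminf (Eventually.of_forall hbound)).trans_eq (liminf_const _)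
    have hfin : (A : ℝ≥0∞) * 2 ^ (r + k) ≠ ⊤ := by
      apply ENNReal.mul_ne_top (ENNReal.natCast_ne_top A)
      exact ENNReal.pow_ne_top (by norm_num)
    exact ne_top_of_le_ne_top hfin (key.trans hliminf)
  exact this.trans_eq (by simp)

end DimHMixed

open MeasureTheory Metric Set

/-- The Hausdorff dimension of `ℝ^r × ℚ_{p₁} × ⋯ × ℚ_{p_k}`, with the maximum metric
combining the Euclidean absolute values and the normalized `p_i`-adic absolute values,
equals `r + k`. -/
theorem dimH_mixed (r k : ℕ) (p : Fin k → ℕ) [∀ i, Fact (p i).Prime] :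
    dimH (Set.univ : Set ((Fin r → ℝ) × ((i : Fin k) → ℚ_[p i]))) = r + k := by
  have hcast : ((r + k : ℕ) : ℝ≥0∞) = (r : ℝ≥0∞) + k := by push_cast; rfl
  apply le_antisymm
  · -- upper bound
    have hcover : (Set.univ : Set ((Fin r → ℝ) × ((i : Fin k) → ℚ_[p i]))) =
        ⋃ n : ℕ, (closedBall (0 : Fin r → ℝ) n) ×ˢ
          (univ.pi fun i => closedBall (0 : ℚ_[p i]) ((p i : ℝ)^n)) := by
      apply Subset.antisymm _ (subset_univ _)
      rintro ⟨x, y⟩ -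
      obtain ⟨n₀, hn₀⟩ := exists_nat_ge (dist x 0)
      have hyb : ∀ i, ∃ m : ℕ, ‖y i‖ ≤ (p i : ℝ) ^ m := by
        intro i
        obtain ⟨m, hm⟩ := exists_nat_ge ‖y i‖
        refine ⟨m, hm.trans ?_⟩
        have h1 : (m : ℝ) ≤ (2:ℝ) ^ m := by
          exact_mod_cast (Nat.lt_two_pow_self (n := m)).le
        have h2 : (2:ℝ) ^ m ≤ (p i : ℝ) ^ m := by
          apply pow_le_pow_left₀ (by norm_num)
          exact_mod_cast (Fact.out : (p i).Prime).two_le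
        linarith
      choose g hg using hyb
      set nn : ℕ := n₀ ⊔ Finset.univ.sup g with hnn
      refine mem_iUnion.2 ⟨nn, ?_, ?_⟩
      · -- real part
        show x ∈ closedBall 0 (nn : ℝ)
        rw [mem_closedBall]
        calc dist x 0 ≤ (n₀ : ℝ) := hn₀
          _ ≤ (nn : ℝ) := by exact_mod_cast Nat.le_max_left _ _
      · -- p-adic part
        intro i _
        show y i ∈ closedBall 0 ((p i : ℝ) ^ nn)
        rw [mem_closedBall, dist_zero_right]
        calc ‖y i‖ ≤ (p i : ℝ) ^ (g i) := hg i
          _ ≤ (p i : ℝ) ^ nn := by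
              apply pow_le_pow_right₀
              · exact_mod_cast (Fact.out : (p i).Prime).one_le
              · exact le_sup_of_le_right (Finset.le_sup (Finset.mem_univ i))
    calc dimH (Set.univ : Set ((Fin r → ℝ) × ((i : Fin k) → ℚ_[p i])))
        = ⨆ n : ℕ, dimH ((closedBall (0 : Fin r → ℝ) n) ×ˢ
            (univ.pi fun i => closedBall (0 : ℚ_[p i]) ((p i : ℝ)^n)) :
          Set ((Fin r → ℝ) × ((i : Fin k) → ℚ_[p i]))) := by
          rw [hcover, dimH_iUnion]
      _ ≤ ((r + k : ℕ) : ℝ≥0∞) := iSup_le fun n => DimHMixed.upper_piece r k p n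
      _ = (r : ℝ≥0∞) + k := hcast
  · -- lower bound
    rw [← hcast]
    exact DimHMixed.lower_bound r k p
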